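/- For positive bounded operators A, B on a complex Hilbert space and a bounded operator X, ‖A²X + XB² + 2AXB‖ ≥ 2‖A^{3/2} X B^{1/2} + A^{1/2} X B^{3/2}‖. -/

import Mathlib

open ContinuousLinearMap

variable {H : Type*} [NormedAddCommGroup H] [InnerProductSpace ℂ H] [CompleteSpace H]

open NormedSpace
set_option maxHeartbeats 1000000
set_option synthInstance.maxHeartbeats 400000

namespace Stmt8Aux

noncomputable def Eop (A : H →L[ℂ] H) (t : ℝ) : H →L[ℂ] H := NormedSpace.exp (t • (-A))
noncomputable def Pop (A : H →L[ℂ] H) (t : ℝ) : H →L[ℂ] H :=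
  cfc (fun x : ℝ => Real.sqrt x * Real.exp (t * -x)) A

variable {A : H →L[ℂ] H}

lemma Eop_eq_cfc (hA : 0 ≤ A) (t : ℝ) :
    Eop A t = cfc (fun x : ℝ => Real.exp (t * -x)) A := by
  have hsa : IsSelfAdjoint A := .of_nonneg hA
  have h1 : cfc (fun x : ℝ => t * -x) A = t • (-A) := by
    have e : (fun x : ℝ => t * -x) = fun x : ℝ => t • (-x) := rfl
    rw [e, cfc_smul t (fun x : ℝ => -x) A, cfc_neg_id _ hsa]
  rw [Eop]
  rw [cfc_comp' Real.exp (fun x : ℝ => t * -x) A (by fun_prop) (by fun_prop) hsa, h1,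
    CFC.real_exp_eq_normedSpace_exp (h1 ▸ cfc_predicate _ A)]

lemma Eop_zero : Eop A 0 = 1 := by simp [Eop, exp_zero]

lemma Eop_continuous : Continuous (Eop A) :=
  (continuous_iff_continuousAt.2 fun x => (exp_analytic (𝕂 := ℝ) x).continuousAt).comp (by continuity)

lemma Eop_nonneg (hA : 0 ≤ A) (t : ℝ) : 0 ≤ Eop A t := by
  rw [Eop_eq_cfc hA t]
  exact cfc_nonneg fun x _ => (Real.exp_pos _).le

lemma hasDerivAt_Eop (t : ℝ) : HasDerivAt (Eop A) (-(A * Eop A t)) t := by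
  have h := hasDerivAt_exp_smul_const' (𝕂 := ℝ) (-A) t
  rw [show -(A * Eop A t) = -A * Eop A t from (neg_mul _ _).symm]
  exact h

lemma Eop_comm_self (t : ℝ) : A * Eop A t = Eop A t * A := by
  have h := (hasDerivAt_exp_smul_const (𝕂 := ℝ) (-A) t).unique
    (hasDerivAt_exp_smul_const' (𝕂 := ℝ) (-A) t)
  simpa [Eop, neg_mul, mul_neg, neg_inj] using h.symm

lemma sqrt_mul_Eop (hA : 0 ≤ A) (t : ℝ) : cfc Real.sqrt A * Eop A t = Pop A t := by
  rw [Eop_eq_cfc hA t, ← cfc_mul Real.sqrt _ A]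
  rfl

lemma Eop_mul_sqrt (hA : 0 ≤ A) (t : ℝ) : Eop A t * cfc Real.sqrt A = Pop A t := by
  rw [Eop_eq_cfc hA t, ← cfc_mul _ Real.sqrt A]
  exact cfc_congr fun x _ => mul_comm _ _

lemma Pop_selfAdjoint (t : ℝ) : IsSelfAdjoint (Pop A t) := cfc_predicate _ A

lemma mul_Eop_eq_cfc (hA : 0 ≤ A) (s : ℝ) :
    A * Eop A s = cfc (fun x : ℝ => x * Real.exp (s * -x)) A := by
  have hsa : IsSelfAdjoint A := .of_nonneg hA
  nth_rewrite 1 [← cfc_id' ℝ A hsa]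
  rw [Eop_eq_cfc hA s, ← cfc_mul _ _ A]

lemma Pop_mul_Pop (hA : 0 ≤ A) (t : ℝ) : Pop A t * Pop A t = A * Eop A (2 * t) := by
  rw [Pop, ← cfc_mul _ _ A, mul_Eop_eq_cfc hA (2 * t)]
  apply cfc_congr
  intro x hx
  have hx0 : 0 ≤ x := spectrum_nonneg_of_nonneg hA hx
  have h1 : Real.sqrt x * Real.sqrt x = x := Real.mul_self_sqrt hx0
  dsimp only
  rw [show Real.sqrt x * Real.exp (t * -x) * (Real.sqrt x * Real.exp (t * -x))
      = (Real.sqrt x * Real.sqrt x) * (Real.exp (t * -x) * Real.exp (t * -x)) by ring,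
    h1, ← Real.exp_add]
  ring_nf

lemma scalar_exp_bound {t x : ℝ} (ht : 0 < t) (hx : 0 ≤ x) :
    x * Real.exp (2 * t * -x) ≤ 1 / (2 * Real.exp 1 * t) := by
  have h1 : (2*t*x) ≤ Real.exp (2*t*x - 1) := by
    have := Real.add_one_le_exp (2*t*x - 1); linarith
  have h2 : (2*t*x) * Real.exp (-(2*t*x)) ≤ Real.exp (-1:ℝ) := by
    calc (2*t*x) * Real.exp (-(2*t*x))
        ≤ Real.exp (2*t*x-1) * Real.exp (-(2*t*x)) :=
          mul_le_mul_of_nonneg_right h1 (Real.exp_nonneg _)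
      _ = Real.exp (-1:ℝ) := by rw [← Real.exp_add]; ring_nf
  have h3 : 2 * t * -x = -(2*t*x) := by ring
  rw [h3]
  have h4 : x * Real.exp (-(2*t*x)) * (2*t) ≤ Real.exp (-1:ℝ) := by
    calc x * Real.exp (-(2*t*x)) * (2*t) = (2*t*x) * Real.exp (-(2*t*x)) := by ring
      _ ≤ _ := h2
  rw [le_div_iff₀ (by positivity)]
  calc x * Real.exp (-(2*t*x)) * (2 * Real.exp 1 * t)
      = (x * Real.exp (-(2*t*x)) * (2*t)) * Real.exp 1 := by ring
    _ ≤ Real.exp (-1:ℝ) * Real.exp 1 := mul_le_mul_of_nonneg_right h4 (Real.exp_nonneg _)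
    _ = 1 := by rw [← Real.exp_add]; simp

lemma norm_Pop_le (hA : 0 ≤ A) {t : ℝ} (ht : 0 < t) :
    ‖Pop A t‖ ≤ Real.sqrt (1/(2*Real.exp 1 * t)) := by
  apply norm_cfc_le (Real.sqrt_nonneg _)
  intro x hx
  have hx0 : 0 ≤ x := spectrum_nonneg_of_nonneg hA hx
  rw [Real.norm_eq_abs, abs_of_nonneg (by positivity)]
  have e : Real.sqrt x * Real.exp (t * -x) = Real.sqrt (x * Real.exp (2*t*-x)) := by
    rw [show (2*t*-x) = (t*-x) + (t*-x) by ring, Real.exp_add, Real.sqrt_mul hx0,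
      Real.sqrt_mul_self (Real.exp_nonneg _)]
  rw [e]
  exact Real.sqrt_le_sqrt (scalar_exp_bound ht hx0)

lemma norm_Pop_mul_le {B : H →L[ℂ] H} (hA : 0 ≤ A) (hB : 0 ≤ B) {t : ℝ} (ht : 0 < t) :
    ‖Pop A t‖ * ‖Pop B t‖ ≤ 1/(2*Real.exp 1 * t) := by
  have c0 : (0:ℝ) ≤ 1/(2*Real.exp 1*t) := by positivity
  calc ‖Pop A t‖ * ‖Pop B t‖
      ≤ Real.sqrt (1/(2*Real.exp 1*t)) * Real.sqrt (1/(2*Real.exp 1*t)) :=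
        mul_le_mul (norm_Pop_le hA ht) (norm_Pop_le hB ht) (norm_nonneg _) (Real.sqrt_nonneg _)
    _ = 1/(2*Real.exp 1*t) := Real.mul_self_sqrt c0

lemma integral_Eop {B : H →L[ℂ] H} (hA : 0 ≤ A) (hB : 0 ≤ B) (X : H →L[ℂ] H) (τ : ℝ) :
    (∫ t in (0:ℝ)..τ, Eop A t * (A * X + X * B) * Eop B t)
      = X - Eop A τ * X * Eop B τ := by
  have hder : ∀ t ∈ Set.uIcc (0:ℝ) τ, HasDerivAt (fun t => -(Eop A t * X * Eop B t))
      (Eop A t * (A * X + X * B) * Eop B t) t := by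
    intro t _
    have h := (((hasDerivAt_Eop (A := A) t).mul_const X).mul (hasDerivAt_Eop (A := B) t)).neg
    refine h.congr_deriv ?_
    have e1 : A * Eop A t = Eop A t * A := Eop_comm_self t
    simp only [neg_mul, mul_neg, neg_neg, neg_add_rev, neg_add]
    rw [e1]
    noncomm_ring
  have hint : IntervalIntegrable (fun t => Eop A t * (A * X + X * B) * Eop B t)
      MeasureTheory.volume 0 τ :=
    (((Eop_continuous).mul continuous_const).mul (Eop_continuous)).intervalIntegrable _ _
  rw [intervalIntegral.integral_eq_sub_of_hasDerivAt hder hint]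
  simp [Eop_zero]
  abel

lemma Pop_continuous (hA : 0 ≤ A) : Continuous (Pop A) := by
  have : Pop A = fun t => cfc Real.sqrt A * Eop A t := by
    funext t; rw [sqrt_mul_Eop hA]
  rw [this]
  exact continuous_const.mul Eop_continuous

lemma sandwich {B : H →L[ℂ] H} (hA : 0 ≤ A) (hB : 0 ≤ B) (X : H →L[ℂ] H) (τ : ℝ) :
    cfc Real.sqrt A * X * cfc Real.sqrt B
      = (∫ t in (0:ℝ)..τ, Pop A t * (A * X + X * B) * Pop B t)
        + Pop A τ * X * Pop B τ := by
  set Y := A * X + X * B with hY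
  set sA := cfc Real.sqrt A
  set sB := cfc Real.sqrt B
  let L : (H →L[ℂ] H) →L[ℂ] (H →L[ℂ] H) :=
    ((ContinuousLinearMap.mul ℂ (H →L[ℂ] H)) sA).comp
      (((ContinuousLinearMap.mul ℂ (H →L[ℂ] H)).flip) sB)
  have hLdef : ∀ M, L M = sA * M * sB := fun M => (mul_assoc sA M sB).symm
  have hint : IntervalIntegrable (fun t => Eop A t * Y * Eop B t)
      MeasureTheory.volume 0 τ :=
    (((Eop_continuous).mul continuous_const).mul (Eop_continuous)).intervalIntegrable _ _
  have key : X = (∫ t in (0:ℝ)..τ, Eop A t * Y * Eop B t) + Eop A τ * X * Eop B τ := by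
    rw [integral_Eop hA hB X τ]; abel
  have e2 : ∀ t, L (Eop A t * Y * Eop B t) = Pop A t * Y * Pop B t := by
    intro t
    rw [hLdef]
    calc sA * (Eop A t * Y * Eop B t) * sB = (sA * Eop A t) * Y * (Eop B t * sB) := by
          noncomm_ring
      _ = Pop A t * Y * Pop B t := by rw [sqrt_mul_Eop hA, Eop_mul_sqrt hB]
  calc sA * X * sB = L X := (hLdef X).symm
    _ = L (∫ t in (0:ℝ)..τ, Eop A t * Y * Eop B t) + L (Eop A τ * X * Eop B τ) := by
        rw [← map_add, ← key]
    _ = (∫ t in (0:ℝ)..τ, Pop A t * Y * Pop B t) + Pop A τ * X * Pop B τ := by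
        rw [← L.intervalIntegral_comp_comm hint]
        congr 1
        · exact intervalIntegral.integral_congr fun t _ => e2 t
        · rw [hLdef]
          calc sA * (Eop A τ * X * Eop B τ) * sB
              = (sA * Eop A τ) * X * (Eop B τ * sB) := by noncomm_ring
            _ = _ := by rw [sqrt_mul_Eop hA, Eop_mul_sqrt hB]

open scoped InnerProductSpace in
lemma inner_Pop_sq (hA : 0 ≤ A) (t : ℝ) (g : H) :
    Complex.re ⟪g, (A * Eop A (2 * t)) g⟫_ℂ = ‖Pop A t g‖^2 := by
  rw [← Pop_mul_Pop hA t]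
  have hP : IsSelfAdjoint (Pop A t) := Pop_selfAdjoint t
  have hadj : ContinuousLinearMap.adjoint (Pop A t) = Pop A t := by
    rw [← ContinuousLinearMap.star_eq_adjoint]; exact hP
  have e : (Pop A t * Pop A t) g = Pop A t (Pop A t g) := rfl
  rw [e, ← ContinuousLinearMap.adjoint_inner_left, hadj]
  exact inner_self_eq_norm_sq (𝕜 := ℂ) (Pop A t g)

open scoped InnerProductSpace

noncomputable def Lg (g : H) : (H →L[ℂ] H) →L[ℝ] ℝ :=
  Complex.reCLM.comp (((innerSL ℂ g).comp (ContinuousLinearMap.apply ℂ H g)).restrictScalars ℝ)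

lemma Lg_apply (g : H) (M : H →L[ℂ] H) : Lg g M = Complex.re ⟪g, M g⟫_ℂ := rfl

lemma Lg_nonneg (g : H) {M : H →L[ℂ] H} (hM : 0 ≤ M) : 0 ≤ Lg g M := by
  rw [Lg_apply]
  exact (Complex.nonneg_iff.mp (((ContinuousLinearMap.nonneg_iff_isPositive M).mp hM).inner_nonneg_right g)).1

lemma hasDerivAt_Eop_two (t : ℝ) :
    HasDerivAt (fun u : ℝ => Eop A (2 * u)) ((2:ℝ) • -(A * Eop A (2 * t))) t := by
  have h1 : HasDerivAt (fun u : ℝ => 2 * u) (2:ℝ) t := by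
    simpa using (hasDerivAt_id t).const_mul (2:ℝ)
  exact (hasDerivAt_Eop (A := A) (2 * t)).scomp t h1

lemma integral_Pop_sq (hA : 0 ≤ A) (g : H) (τ : ℝ) :
    (∫ t in (0:ℝ)..τ, ‖Pop A t g‖^2) ≤ ‖g‖^2 / 2 := by
  have hder : ∀ t ∈ Set.uIcc (0:ℝ) τ, HasDerivAt (fun u => -(1/2 : ℝ) * Lg g (Eop A (2 * u)))
      (‖Pop A t g‖^2) t := by
    intro t _
    have h1 := ((Lg g).hasFDerivAt.comp_hasDerivAt t (hasDerivAt_Eop_two (A := A) t)).const_mul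
      (-(1/2 : ℝ))
    refine h1.congr_deriv ?_
    rw [map_smul, map_neg, smul_eq_mul, Lg_apply, inner_Pop_sq hA t g]
    ring
  have hint : IntervalIntegrable (fun t => ‖Pop A t g‖^2) MeasureTheory.volume 0 τ := by
    apply Continuous.intervalIntegrable
    exact (((ContinuousLinearMap.apply ℂ H g).continuous.comp (Pop_continuous hA)).norm).pow 2
  rw [intervalIntegral.integral_eq_sub_of_hasDerivAt hder hint]
  have h0 : Lg g (Eop A (2 * 0)) = ‖g‖^2 := by
    rw [mul_zero, Eop_zero, Lg_apply]
    simpa using inner_self_eq_norm_sq (𝕜 := ℂ) g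
  have hpos : 0 ≤ Lg g (Eop A (2 * τ)) := Lg_nonneg g (Eop_nonneg hA _)
  rw [h0]
  nlinarith [hpos]

lemma opNorm_le_of_inner {K : H →L[ℂ] H} {C : ℝ} (hC : 0 ≤ C)
    (h : ∀ f g : H, ‖(⟪g, K f⟫_ℂ)‖ ≤ C * ((‖f‖^2 + ‖g‖^2)/2)) : ‖K‖ ≤ C := by
  apply ContinuousLinearMap.opNorm_le_bound _ hC
  intro f
  rcases eq_or_ne (K f) 0 with h0 | h0
  · rw [h0, norm_zero]; positivity
  have hKf : 0 < ‖K f‖ := norm_pos_iff.mpr h0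
  have hf : 0 < ‖f‖ := by
    rcases eq_or_ne f 0 with rfl | hf
    · simp at h0
    · exact norm_pos_iff.mpr hf
  set c : ℝ := Real.sqrt (‖K f‖ / ‖f‖) with hc
  have hc0 : 0 < c := Real.sqrt_pos.mpr (by positivity)
  have hcsq : c^2 = ‖K f‖ / ‖f‖ := Real.sq_sqrt (by positivity)
  have happ := h (c • f) (c⁻¹ • K f)
  have e1 : K (c • f) = c • K f := K.map_smul_of_tower c f
  have e2 : (⟪c⁻¹ • K f, c • K f⟫_ℂ) = ⟪K f, K f⟫_ℂ := by
    rw [RCLike.real_smul_eq_coe_smul (K := ℂ) c⁻¹, RCLike.real_smul_eq_coe_smul (K := ℂ) c,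
      inner_smul_real_left, inner_smul_real_right, smul_smul, inv_mul_cancel₀ hc0.ne']
    simp
  rw [e1, e2] at happ
  have e3 : ‖(⟪K f, K f⟫_ℂ)‖ = ‖K f‖^2 := by
    rw [inner_self_eq_norm_sq_to_K]
    push_cast
    simp [pow_two, abs_of_nonneg (norm_nonneg (K f))]
  rw [e3, norm_smul, norm_smul] at happ
  have hnc : ‖c‖ = c := by rw [Real.norm_eq_abs]; exact abs_of_pos hc0
  have hnc' : ‖c⁻¹‖ = c⁻¹ := by rw [Real.norm_eq_abs]; exact abs_of_pos (inv_pos.mpr hc0)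
  rw [hnc, hnc'] at happ
  have key : ‖K f‖^2 ≤ C * (‖f‖ * ‖K f‖) := by
    have hc2 : (c * ‖f‖)^2 = ‖K f‖ * ‖f‖ := by
      rw [mul_pow, hcsq]; field_simp
    have hc2' : (c⁻¹ * ‖K f‖)^2 = ‖f‖ * ‖K f‖ := by
      rw [mul_pow, inv_pow, hcsq]; field_simp
    calc ‖K f‖^2 ≤ C * (((c * ‖f‖)^2 + (c⁻¹ * ‖K f‖)^2)/2) := happ
      _ = C * (‖f‖ * ‖K f‖) := by rw [hc2, hc2']; ring
  nlinarith [hKf, hf, hC]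

lemma core {A B : H →L[ℂ] H} (hA : 0 ≤ A) (hB : 0 ≤ B) (X : H →L[ℂ] H) :
    2 * ‖cfc Real.sqrt A * X * cfc Real.sqrt B‖ ≤ ‖A * X + X * B‖ := by
  set Y := A * X + X * B with hY
  set K := cfc Real.sqrt A * X * cfc Real.sqrt B with hK
  have main : ∀ ε > 0, ‖K‖ ≤ ‖Y‖/2 + ε := by
    intro ε hε
    set τ : ℝ := (‖X‖ + 1)/ε with hτdef
    have hτ : 0 < τ := by positivity
    have hexp2 : (2:ℝ) ≤ Real.exp 1 := by
      have := Real.add_one_le_exp (1:ℝ); linarith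
    set δ : ℝ := ‖X‖ / (2 * Real.exp 1 * τ) with hδdef
    have hδ0 : 0 ≤ δ := by positivity
    have hδε : δ ≤ ε := by
      have h1 : δ ≤ ‖X‖ / τ := by
        apply div_le_div_of_nonneg_left (norm_nonneg X) hτ
        nlinarith
      have h2 : ‖X‖ / τ ≤ ε := by
        rw [hτdef, div_div_eq_mul_div, div_le_iff₀ (by positivity)]
        nlinarith [norm_nonneg X]
      linarith
    suffices hs : ‖K‖ ≤ ‖Y‖/2 + δ by linarith
    apply opNorm_le_of_inner (by positivity)
    intro f g
    have hPab_cont : Continuous (fun t => Pop A t * Y * Pop B t) :=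
      ((Pop_continuous hA).mul continuous_const).mul (Pop_continuous hB)
    have hint : IntervalIntegrable (fun t => Pop A t * Y * Pop B t)
        MeasureTheory.volume 0 τ := hPab_cont.intervalIntegrable _ _
    let Lfg : (H →L[ℂ] H) →L[ℂ] ℂ := (innerSL ℂ g).comp (ContinuousLinearMap.apply ℂ H f)
    have hLfg : ∀ M : H →L[ℂ] H, Lfg M = ⟪g, M f⟫_ℂ := fun _ => rfl
    have expand : (⟪g, K f⟫_ℂ) = (∫ t in (0:ℝ)..τ, ⟪g, (Pop A t * Y * Pop B t) f⟫_ℂ)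
        + ⟪g, (Pop A τ * X * Pop B τ) f⟫_ℂ := by
      rw [← hLfg, ← hLfg, hK, sandwich hA hB X τ, map_add,
        ← Lfg.intervalIntegral_comp_comm hint]
      rfl
    have pt : ∀ t : ℝ, ‖(⟪g, (Pop A t * Y * Pop B t) f⟫_ℂ)‖
        ≤ ‖Y‖ * (‖Pop B t f‖^2 + ‖Pop A t g‖^2)/2 := by
      intro t
      have hadj : ContinuousLinearMap.adjoint (Pop A t) = Pop A t := by
        rw [← ContinuousLinearMap.star_eq_adjoint]; exact Pop_selfAdjoint t
      have e : (Pop A t * Y * Pop B t) f = Pop A t (Y (Pop B t f)) := rfl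
      rw [e, ← ContinuousLinearMap.adjoint_inner_left, hadj]
      calc ‖(⟪Pop A t g, Y (Pop B t f)⟫_ℂ)‖
          ≤ ‖Pop A t g‖ * ‖Y (Pop B t f)‖ := norm_inner_le_norm _ _
        _ ≤ ‖Pop A t g‖ * (‖Y‖ * ‖Pop B t f‖) :=
            mul_le_mul_of_nonneg_left (Y.le_opNorm _) (norm_nonneg _)
        _ ≤ ‖Y‖ * (‖Pop B t f‖^2 + ‖Pop A t g‖^2)/2 := by
            nlinarith [norm_nonneg (Pop A t g), norm_nonneg (Pop B t f), norm_nonneg Y,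
              sq_nonneg (‖Pop A t g‖ - ‖Pop B t f‖)]
    have contB : Continuous fun t => ‖Pop B t f‖^2 :=
      (((ContinuousLinearMap.apply ℂ H f).continuous.comp (Pop_continuous hB)).norm).pow 2
    have contA : Continuous fun t => ‖Pop A t g‖^2 :=
      (((ContinuousLinearMap.apply ℂ H g).continuous.comp (Pop_continuous hA)).norm).pow 2
    have contI : Continuous fun t => ‖(⟪g, (Pop A t * Y * Pop B t) f⟫_ℂ)‖ := by
      apply Continuous.norm
      exact (innerSL ℂ g).continuous.comp
        ((ContinuousLinearMap.apply ℂ H f).continuous.comp hPab_cont)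
    have int1 : ‖∫ t in (0:ℝ)..τ, ⟪g, (Pop A t * Y * Pop B t) f⟫_ℂ‖
        ≤ ∫ t in (0:ℝ)..τ, ‖Y‖ * (‖Pop B t f‖^2 + ‖Pop A t g‖^2)/2 := by
      refine (intervalIntegral.norm_integral_le_integral_norm hτ.le).trans ?_
      apply intervalIntegral.integral_mono_on hτ.le (contI.intervalIntegrable _ _)
        (((continuous_const.mul (contB.add contA)).div_const 2).intervalIntegrable _ _)
      exact fun t _ => pt t
    have int2 : (∫ t in (0:ℝ)..τ, ‖Y‖ * (‖Pop B t f‖^2 + ‖Pop A t g‖^2)/2)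
        ≤ ‖Y‖/2 * ((‖f‖^2 + ‖g‖^2)/2) := by
      have efun : (fun t => ‖Y‖ * (‖Pop B t f‖^2 + ‖Pop A t g‖^2)/2)
          = fun t => (‖Y‖/2) * (‖Pop B t f‖^2 + ‖Pop A t g‖^2) := by
        funext t; ring
      rw [efun, intervalIntegral.integral_const_mul,
        intervalIntegral.integral_add (contB.intervalIntegrable _ _)
          (contA.intervalIntegrable _ _)]
      have b1 := integral_Pop_sq hB f τ
      have b2 := integral_Pop_sq hA g τ
      have hY0 : (0:ℝ) ≤ ‖Y‖/2 := by positivity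
      calc (‖Y‖/2) * ((∫ t in (0:ℝ)..τ, ‖Pop B t f‖^2) + ∫ t in (0:ℝ)..τ, ‖Pop A t g‖^2)
          ≤ (‖Y‖/2) * (‖f‖^2/2 + ‖g‖^2/2) :=
            mul_le_mul_of_nonneg_left (add_le_add b1 b2) hY0
        _ = ‖Y‖/2 * ((‖f‖^2 + ‖g‖^2)/2) := by ring
    have corner : ‖(⟪g, (Pop A τ * X * Pop B τ) f⟫_ℂ)‖ ≤ δ * ((‖f‖^2 + ‖g‖^2)/2) := by
      have hn : ‖Pop A τ * X * Pop B τ‖ ≤ δ := by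
        calc ‖Pop A τ * X * Pop B τ‖ ≤ ‖Pop A τ * X‖ * ‖Pop B τ‖ := norm_mul_le _ _
          _ ≤ (‖Pop A τ‖ * ‖X‖) * ‖Pop B τ‖ :=
              mul_le_mul_of_nonneg_right (norm_mul_le _ _) (norm_nonneg _)
          _ = (‖Pop A τ‖ * ‖Pop B τ‖) * ‖X‖ := by ring
          _ ≤ (1/(2*Real.exp 1*τ)) * ‖X‖ :=
              mul_le_mul_of_nonneg_right (norm_Pop_mul_le hA hB hτ) (norm_nonneg X)
          _ = δ := by rw [hδdef]; ring
      calc ‖(⟪g, (Pop A τ * X * Pop B τ) f⟫_ℂ)‖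
          ≤ ‖g‖ * ‖(Pop A τ * X * Pop B τ) f‖ := norm_inner_le_norm _ _
        _ ≤ ‖g‖ * (‖Pop A τ * X * Pop B τ‖ * ‖f‖) :=
            mul_le_mul_of_nonneg_left (le_opNorm _ _) (norm_nonneg g)
        _ ≤ δ * ((‖f‖^2 + ‖g‖^2)/2) := by
            nlinarith [sq_nonneg (‖f‖ - ‖g‖), norm_nonneg f, norm_nonneg g, hδ0,
              mul_le_mul_of_nonneg_right hn (mul_nonneg (norm_nonneg f) (norm_nonneg g)),
              mul_nonneg (norm_nonneg g) (mul_nonneg (norm_nonneg (Pop A τ * X * Pop B τ)) (norm_nonneg f))]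
    calc ‖(⟪g, K f⟫_ℂ)‖
        ≤ ‖∫ t in (0:ℝ)..τ, ⟪g, (Pop A t * Y * Pop B t) f⟫_ℂ‖
          + ‖(⟪g, (Pop A τ * X * Pop B τ) f⟫_ℂ)‖ := by rw [expand]; exact norm_add_le _ _
      _ ≤ ‖Y‖/2 * ((‖f‖^2+‖g‖^2)/2) + δ*((‖f‖^2+‖g‖^2)/2) :=
          add_le_add (int1.trans int2) corner
      _ = (‖Y‖/2 + δ) * ((‖f‖^2+‖g‖^2)/2) := by ring
  by_contra hcon
  push_neg at hcon
  have := main ((2 * ‖K‖ - ‖Y‖)/4) (by linarith)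
  linarith

lemma rpow_half (hA : 0 ≤ A) : A ^ ((1:ℝ)/2) = cfc Real.sqrt A := by
  rw [CFC.rpow_def, cfc_nnreal_eq_real _ A hA]
  apply cfc_congr
  intro x hx
  have hx0 : 0 ≤ x := spectrum_nonneg_of_nonneg hA hx
  simp only [NNReal.coe_rpow, Real.coe_toNNReal x hx0]
  rw [Real.sqrt_eq_rpow]

lemma rpow_three_half (hA : 0 ≤ A) : A ^ ((3:ℝ)/2) = cfc Real.sqrt A * A := by
  have hsa : IsSelfAdjoint A := .of_nonneg hA
  have e : cfc Real.sqrt A * A = cfc (fun x : ℝ => Real.sqrt x * x) A := by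
    nth_rewrite 2 [← cfc_id' ℝ A hsa]
    rw [← cfc_mul Real.sqrt (fun x : ℝ => x) A]
  rw [e, CFC.rpow_def, cfc_nnreal_eq_real _ A hA]
  apply cfc_congr
  intro x hx
  have hx0 : 0 ≤ x := spectrum_nonneg_of_nonneg hA hx
  simp only [NNReal.coe_rpow, Real.coe_toNNReal x hx0]
  rw [show (3:ℝ)/2 = 1/2 + 1 by norm_num, Real.rpow_add' hx0 (by norm_num),
    Real.rpow_one, Real.sqrt_eq_rpow]

lemma rpow_three_half' (hA : 0 ≤ A) : A ^ ((3:ℝ)/2) = A * cfc Real.sqrt A := by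
  have hsa : IsSelfAdjoint A := .of_nonneg hA
  have e' : A * cfc Real.sqrt A = cfc (fun x : ℝ => Real.sqrt x * x) A := by
    nth_rewrite 1 [← cfc_id' ℝ A hsa]
    rw [← cfc_mul (fun x : ℝ => x) Real.sqrt A]
    exact cfc_congr fun x _ => mul_comm _ _
  have e : cfc Real.sqrt A * A = cfc (fun x : ℝ => Real.sqrt x * x) A := by
    nth_rewrite 2 [← cfc_id' ℝ A hsa]
    rw [← cfc_mul Real.sqrt (fun x : ℝ => x) A]
  rw [rpow_three_half hA, e, e']

end Stmt8Aux

open Stmt8Aux in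
theorem stmt8 (A B : H →L[ℂ] H) (hA : 0 ≤ A) (hB : 0 ≤ B) (X : H →L[ℂ] H) :
    2 * ‖A ^ ((3:ℝ)/2) * X * B ^ ((1:ℝ)/2) + A ^ ((1:ℝ)/2) * X * B ^ ((3:ℝ)/2)‖ ≤
      ‖A ^ 2 * X + X * B ^ 2 + (2 : ℝ) • (A * X * B)‖ := by
  rw [rpow_three_half hA, rpow_three_half' hB, rpow_half hA, rpow_half hB]
  have e1 : cfc Real.sqrt A * A * X * cfc Real.sqrt B
        + cfc Real.sqrt A * X * (B * cfc Real.sqrt B)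
      = cfc Real.sqrt A * (A*X+X*B) * cfc Real.sqrt B := by noncomm_ring
  rw [e1]
  have e2 : A^2*X + X*B^2 + (2:ℝ)•(A*X*B) = A*(A*X+X*B) + (A*X+X*B)*B := by
    rw [show ((2:ℝ)•(A*X*B)) = A*X*B + A*X*B from two_smul ℝ (A*X*B)]
    noncomm_ring
  rw [e2]
  exact core hA hB (A*X+X*B)
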